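/- arXiv:0810.1599 — 3 statements merged into one kernel-verified Lean document; each statement's English description precedes it below -/
import Mathlib

section
/- Let a ≥ √3/2 be real and let k be a positive integer with k(k+2) ≤ 4a². Then the number of a-admissible sequences (m₁,…,mₙ) whose first entry satisfies |m₁| = k/2 equals 2 + 2·N_≤(a − √(k(k+2))/2), where N_≤(b) denotes the total number of b-admissible sequences (so N_≤(b) = 0 for b < √3/2). -/
/-- The weight of an entry `j : ℤ` encoding the nonzero half-integer `m = j/2`:
`√(|m|(|m|+1)) = √(|j|(|j|+2))/2`. -/
noncomputable def wt (j : ℤ) : ℝ := Real.sqrt (|(j : ℝ)| * (|(j : ℝ)| + 2)) / 2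

/-- The set of `a`-admissible sequences: nonempty lists of nonzero half-integers
`mᵢ = jᵢ/2` with `∑ᵢ √(|mᵢ|(|mᵢ|+1)) ≤ a`. -/
def adm (a : ℝ) : Set (List ℤ) :=
  {l | l ≠ [] ∧ (∀ j ∈ l, j ≠ 0) ∧ (l.map wt).sum ≤ a}

/-- `N_≤(a)`, the number of `a`-admissible sequences. -/
noncomputable def Nle (a : ℝ) : ℕ := Nat.card (adm a)


lemma wt_nonneg (j : ℤ) : 0 ≤ wt j := by
  unfold wt; positivity

lemma wt_ge (j : ℤ) (hj : j ≠ 0) : Real.sqrt 3 / 2 ≤ wt j := by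
  unfold wt
  have h1 : (1 : ℝ) ≤ |(j : ℝ)| := by
    rw [← Int.cast_abs]; exact_mod_cast Int.one_le_abs hj
  gcongr
  nlinarith

lemma adm_finite (a : ℝ) : (adm a).Finite := by
  set M : ℤ := ⌊4 * a ^ 2⌋
  set s : Finset ℤ := Finset.Icc (-M) M with hs
  set N : ℕ := ⌊2 * a⌋₊
  have hsub : adm a ⊆ (List.map (Subtype.val : {x // x ∈ s} → ℤ)) ''
      {l : List {x // x ∈ s} | l.length ≤ N} := by
    rintro l ⟨hne, hnz, hsum⟩
    have hwnn : ∀ x ∈ l.map wt, (0:ℝ) ≤ x := by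
      intro x hx; obtain ⟨j, _, rfl⟩ := List.mem_map.1 hx; exact wt_nonneg j
    have hlen : l.length ≤ N := by
      have h1 : (l.length : ℝ) * (Real.sqrt 3 / 2) ≤ (l.map wt).sum := by
        have := List.card_nsmul_le_sum (l.map wt) (Real.sqrt 3 / 2) ?_
        · simpa [List.length_map, nsmul_eq_mul] using this
        · intro x hx; obtain ⟨j, hj, rfl⟩ := List.mem_map.1 hx; exact wt_ge j (hnz j hj)
      have h3 : (1:ℝ) ≤ Real.sqrt 3 := by
        rw [show (1:ℝ) = Real.sqrt 1 by simp]
        exact Real.sqrt_le_sqrt (by norm_num)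
      have : (l.length : ℝ) ≤ 2 * a := by nlinarith [le_trans h1 hsum]
      exact Nat.le_floor this
    have hmem : ∀ j ∈ l, j ∈ s := by
      intro j hj
      have hw : wt j ≤ a := le_trans (List.single_le_sum hwnn _ (List.mem_map_of_mem (f := wt) hj)) hsum
      have habs : (0:ℝ) ≤ |(j:ℝ)| := abs_nonneg _
      have hsq : |(j:ℝ)| * (|(j:ℝ)| + 2) ≤ (2*a)^2 := by
        have h0 : Real.sqrt (|(j:ℝ)| * (|(j:ℝ)| + 2)) ≤ 2 * a := by
          unfold wt at hw; linarith
        nlinarith [Real.sq_sqrt (by positivity : (0:ℝ) ≤ |(j:ℝ)| * (|(j:ℝ)| + 2)),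
          Real.sqrt_nonneg (|(j:ℝ)| * (|(j:ℝ)| + 2))]
      have : (|j| : ℝ) ≤ 4 * a ^ 2 := by
        nlinarith
      have : |j| ≤ M := Int.le_floor.2 (by exact_mod_cast this)
      simp only [hs, Finset.mem_Icc]
      constructor <;> [linarith [neg_abs_le j]; linarith [le_abs_self j]]
    refine ⟨l.attachWith (· ∈ s) hmem, ?_, ?_⟩
    · simpa using hlen
    · simp
  exact Set.Finite.subset ((List.finite_length_le _ N).image _) hsub

/-- for `a ≥ √3/2` and a positive integer `k` with `k(k+2) ≤ 4a²`, the number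
of `a`-admissible sequences whose first entry satisfies `|m₁| = k/2` equals
`2 + 2·N_≤(a - √(k(k+2))/2)`. -/
theorem stmt_2 (a : ℝ) (ha : Real.sqrt 3 / 2 ≤ a) (k : ℕ) (hk : 0 < k)
    (hk2 : (k : ℝ) * ((k : ℝ) + 2) ≤ 4 * a ^ 2) :
    Nat.card {l : List ℤ | l ∈ adm a ∧ ∃ j t, l = j :: t ∧ |j| = (k : ℤ)} =
      2 + 2 * Nle (a - Real.sqrt ((k : ℝ) * ((k : ℝ) + 2)) / 2) := by
  have ha0 : 0 ≤ a := le_trans (by positivity) ha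
  set c : ℝ := Real.sqrt ((k : ℝ) * ((k : ℝ) + 2)) / 2 with hc
  set b : ℝ := a - c with hb
  have hca : c ≤ a := by
    have : Real.sqrt ((k : ℝ) * ((k : ℝ) + 2)) ≤ 2 * a := by
      rw [show 2*a = Real.sqrt ((2*a)^2) by rw [Real.sqrt_sq (by positivity)]]
      exact Real.sqrt_le_sqrt (by nlinarith)
    rw [hc]; linarith
  have hb0 : 0 ≤ b := by rw [hb]; linarith
  have hwtk : ∀ j : ℤ, |j| = (k : ℤ) → wt j = c := by
    intro j hj
    unfold wt
    rw [← Int.cast_abs, hj]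
    push_cast; rw [hc]
  have hset : {l : List ℤ | l ∈ adm a ∧ ∃ j t, l = j :: t ∧ |j| = (k : ℤ)} =
      (fun p : ℤ × List ℤ => p.1 :: p.2) ''
        (({(k:ℤ), -(k:ℤ)} : Set ℤ) ×ˢ (insert ([] : List ℤ) (adm b))) := by
    ext l
    constructor
    · rintro ⟨⟨hne, hnz, hsum⟩, j, t, rfl, hjk⟩
      refine ⟨(j, t), ⟨?_, ?_⟩, rfl⟩
      · rcases abs_eq (by positivity : (0:ℤ) ≤ (k:ℤ)) |>.1 hjk with h | h <;> simp [h]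
      · rcases eq_or_ne t [] with rfl | htne
        · exact Set.mem_insert _ _
        · refine Set.mem_insert_of_mem _ ⟨htne, fun x hx => hnz x (List.mem_cons_of_mem _ hx), ?_⟩
          rw [List.map_cons, List.sum_cons, hwtk j hjk] at hsum
          rw [hb]; linarith
    · rintro ⟨⟨j, t⟩, ⟨hj, ht⟩, rfl⟩
      have hjk : |j| = (k : ℤ) := by
        rcases hj with h | h <;> simp_all
      have hj0 : j ≠ 0 := by
        intro h; rw [h] at hjk; simp at hjk; omega
      have htsum : (t.map wt).sum ≤ b ∧ (∀ x ∈ t, x ≠ 0) := by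
        rcases ht with rfl | ⟨_, h1, h2⟩
        · simpa using hb0
        · exact ⟨h2, h1⟩
      refine ⟨⟨by simp, ?_, ?_⟩, j, t, rfl, hjk⟩
      · intro x hx
        rcases List.mem_cons.1 hx with rfl | hx
        · exact hj0
        · exact htsum.2 x hx
      · rw [List.map_cons, List.sum_cons, hwtk j hjk]
        have := htsum.1; rw [hb] at this; linarith
  rw [hset]
  have hkne : (k : ℤ) ≠ -(k : ℤ) := by omega
  have hinj : Function.Injective (fun p : ℤ × List ℤ => p.1 :: p.2) := by
    rintro ⟨j1, t1⟩ ⟨j2, t2⟩ h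
    simpa [Prod.ext_iff] using h
  rw [Nat.card_coe_set_eq, Set.ncard_image_of_injective _ hinj, ← Nat.card_coe_set_eq,
    Nat.card_congr (Equiv.Set.prod _ _), Nat.card_prod,
    Nat.card_coe_set_eq, Nat.card_coe_set_eq, Set.ncard_pair hkne,
    Set.ncard_insert_of_notMem (fun h => h.1 rfl) (adm_finite b)]
  rw [Nle, Nat.card_coe_set_eq]
  ring
end

section
/- For every real a ≥ √3/2, the number N_≤(a) of a-admissible sequences satisfies the functional equation N_≤(a) = 2(⌊√(4a²+1)⌋ − 1) + 2·∑_{k=1}^{K} N_≤(a − √(k(k+2))/2), where K = ⌊√(4a²+1)⌋ − 1 (equivalently the sum may be taken over all k ≥ 1, since N_≤(b) = 0 for b < √3/2). -/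
lemma wt_neg (j : ℤ) : wt (-j) = wt j := by
  unfold wt; push_cast; rw [abs_neg]

lemma wt_natAbs (j : ℤ) : wt j = wt (j.natAbs) := by
  unfold wt
  rw [Int.cast_natCast, Nat.cast_natAbs]
  norm_num

lemma sqrt3_le_wt {j : ℤ} (hj : j ≠ 0) : Real.sqrt 3 / 2 ≤ wt j := by
  unfold wt
  have h1 : (1:ℝ) ≤ |(j:ℝ)| := by
    rw [← Int.cast_abs]
    exact_mod_cast Int.one_le_abs hj
  gcongr
  nlinarith

lemma half_le_wt {j : ℤ} (hj : j ≠ 0) : (1:ℝ)/2 ≤ wt j := by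
  refine le_trans ?_ (sqrt3_le_wt hj)
  gcongr
  rw [show (1:ℝ) = Real.sqrt 1 by simp]
  exact Real.sqrt_le_sqrt (by norm_num)

lemma wt_le_iff {j : ℤ} (hj : j ≠ 0) {a : ℝ} (ha : 0 ≤ a) :
    wt j ≤ a ↔ j.natAbs + 1 ≤ ⌊Real.sqrt (4 * a ^ 2 + 1)⌋₊ := by
  rw [Nat.le_floor_iff (Real.sqrt_nonneg _)]
  set x : ℝ := |(j:ℝ)| with hx
  have hx0 : 0 ≤ x := abs_nonneg _
  have hxc : ((j.natAbs + 1 : ℕ) : ℝ) = x + 1 := by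
    push_cast [hx, Nat.cast_natAbs]
    ring
  rw [hxc]
  unfold wt
  rw [div_le_iff₀ (by norm_num), Real.sqrt_le_iff,
    Real.le_sqrt (by positivity) (by positivity)]
  constructor
  · rintro ⟨-, h⟩; nlinarith
  · intro h; exact ⟨by positivity, by nlinarith⟩

/-- `N_≤(a)`, the number of `a`-admissible sequences. -/

lemma length_le_sum {l : List ℤ} (h : ∀ j ∈ l, j ≠ 0) :
    (l.length : ℝ) / 2 ≤ (l.map wt).sum := by
  induction l with
  | nil => simp
  | cons x t ih =>
    simp only [List.map_cons, List.sum_cons, List.length_cons]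
    have h1 := half_le_wt (h x (by simp))
    have h2 := ih (fun j hj => h j (by simp [hj]))
    push_cast; linarith

lemma finite_lists {s : Set ℤ} (hs : s.Finite) (n : ℕ) :
    {l : List ℤ | (∀ x ∈ l, x ∈ s) ∧ l.length ≤ n}.Finite := by
  have : Finite s := hs
  apply Set.Finite.subset ((List.finite_length_le s n).image (List.map Subtype.val))
  rintro l ⟨h1, h2⟩
  refine ⟨l.pmap (fun x hx => (⟨x, h1 x hx⟩ : s)) (fun _ h => h), by simpa, ?_⟩
  simp [List.map_pmap]
/-- for every real `a ≥ √3/2`,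
`N_≤(a) = 2(⌊√(4a²+1)⌋ - 1) + 2 ∑_{k=1}^{K} N_≤(a - √(k(k+2))/2)` with `K = ⌊√(4a²+1)⌋ - 1`. -/
theorem stmt_3 (a : ℝ) (ha : Real.sqrt 3 / 2 ≤ a) :
    Nle a = 2 * (⌊Real.sqrt (4 * a ^ 2 + 1)⌋₊ - 1) +
      2 * ∑ k ∈ Finset.Icc 1 (⌊Real.sqrt (4 * a ^ 2 + 1)⌋₊ - 1),
        Nle (a - Real.sqrt ((k : ℝ) * ((k : ℝ) + 2)) / 2) := by
  have sqrt3_ge : (1:ℝ) ≤ Real.sqrt 3 := by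
    rw [show (1:ℝ) = Real.sqrt 1 by simp]
    exact Real.sqrt_le_sqrt (by norm_num)
  have ha0 : 0 ≤ a := by linarith
  have hsq : (3:ℝ)/4 ≤ a ^ 2 := by
    nlinarith [Real.sq_sqrt (by norm_num : (3:ℝ) ≥ 0), Real.sqrt_nonneg 3]
  set F := ⌊Real.sqrt (4 * a ^ 2 + 1)⌋₊ with hFdef
  have hF : 2 ≤ F := by
    apply Nat.le_floor
    rw [show ((2:ℕ):ℝ) = 2 by norm_num, Real.le_sqrt (by norm_num) (by positivity)]
    nlinarith
  set K := F - 1 with hKdef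
  set S : Finset ℤ := Finset.Icc (-(K:ℤ)) K \ {0} with hSdef
  have mem_S : ∀ j : ℤ, j ∈ S ↔ j ≠ 0 ∧ wt j ≤ a := by
    intro j
    simp only [hSdef, Finset.mem_sdiff, Finset.mem_Icc, Finset.mem_singleton]
    constructor
    · rintro ⟨⟨h1, h2⟩, h0⟩
      refine ⟨h0, (wt_le_iff h0 ha0).2 ?_⟩
      omega
    · rintro ⟨h0, hw⟩
      rw [wt_le_iff h0 ha0] at hw
      exact ⟨⟨by omega, by omega⟩, h0⟩
  -- the fiber over head j
  set C : ℤ → Set (List ℤ) := fun j => {l ∈ adm a | l.head? = some j} with hCdef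
  have hCsub : ∀ j, C j ⊆ adm a := fun j l hl => hl.1
  have hCfin : ∀ j, (C j).Finite := fun j => (adm_finite a).subset (hCsub j)
  have hCeq : ∀ j ∈ S, C j = insert [j] ((fun t => j :: t) '' adm (a - wt j)) := by
    intro j hj
    obtain ⟨hj0, hjw⟩ := (mem_S j).1 hj
    ext l
    simp only [hCdef, Set.mem_setOf_eq, Set.mem_insert_iff, Set.mem_image]
    constructor
    · rintro ⟨⟨hne, h0, hsum⟩, hhead⟩
      rcases l with _ | ⟨x, t⟩
      · simp at hhead
      · simp only [List.head?_cons, Option.some.injEq] at hhead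
        subst hhead
        rcases eq_or_ne t [] with rfl | hte
        · left; rfl
        · right
          refine ⟨t, ⟨hte, fun y hy => h0 y (by simp [hy]), ?_⟩, rfl⟩
          simp only [List.map_cons, List.sum_cons] at hsum
          linarith
    · rintro (rfl | ⟨t, ⟨hte, h0, hsum⟩, rfl⟩)
      · refine ⟨⟨by simp, ?_, ?_⟩, rfl⟩
        · intro x hx; simp at hx; subst hx; exact hj0
        · simpa using hjw
      · refine ⟨⟨by simp, ?_, ?_⟩, rfl⟩
        · intro x hx
          rcases List.mem_cons.1 hx with rfl | hx
          · exact hj0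
          · exact h0 x hx
        · simp only [List.map_cons, List.sum_cons]
          linarith
  have hCcard : ∀ j ∈ S, (C j).ncard = Nle (a - wt j) + 1 := by
    intro j hj
    have hnm : [j] ∉ (fun t => j :: t) '' adm (a - wt j) := by
      rintro ⟨t, ht, hcons⟩
      have : t = [] := by simpa using hcons
      exact ht.1 this
    rw [hCeq j hj, Set.ncard_insert_of_notMem hnm ((adm_finite _).image _),
      Set.ncard_image_of_injective _ (fun t1 t2 h => by simpa using h)]
    rw [Nle, Nat.card_coe_set_eq]
  have hwt_le : ∀ l ∈ adm a, ∀ x ∈ l, wt x ≤ a := by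
    rintro l ⟨hne, h0, hsum⟩ x hx
    refine le_trans (List.single_le_sum ?_ _ (List.mem_map_of_mem (f := wt) hx)) hsum
    intro y hy
    obtain ⟨j, -, rfl⟩ := List.mem_map.1 hy
    exact wt_nonneg j
  have hcover : (adm_finite a).toFinset = S.biUnion (fun j => (hCfin j).toFinset) := by
    ext l
    simp only [Set.Finite.mem_toFinset, Finset.mem_biUnion]
    constructor
    · intro hl
      obtain ⟨hne, h0, hsum⟩ := hl
      rcases l with _ | ⟨x, t⟩
      · exact absurd rfl hne
      · refine ⟨x, (mem_S x).2 ⟨h0 x (by simp), ?_⟩, ⟨⟨hne, h0, hsum⟩, rfl⟩⟩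
        exact hwt_le _ ⟨hne, h0, hsum⟩ x (by simp)
    · rintro ⟨j, hj, hl⟩
      exact hl.1
  have hdisj : ∀ x ∈ S, ∀ y ∈ S, x ≠ y →
      Disjoint ((hCfin x).toFinset) ((hCfin y).toFinset) := by
    intro x _ y _ hxy
    rw [Finset.disjoint_left]
    intro l hlx hly
    simp only [Set.Finite.mem_toFinset] at hlx hly
    apply hxy
    have := hlx.2.symm.trans hly.2
    simpa using this
  have hcard1 : Nle a = ∑ j ∈ S, (Nle (a - wt j) + 1) := by
    rw [Nle, Nat.card_coe_set_eq, Set.ncard_eq_toFinset_card _ (adm_finite a),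
      hcover, Finset.card_biUnion hdisj]
    refine Finset.sum_congr rfl fun j hj => ?_
    rw [← Set.ncard_eq_toFinset_card _ (hCfin j), hCcard j hj]
  set I : Finset ℕ := Finset.Icc 1 K with hIdef
  have hSplit : S = I.image (fun k : ℕ => (k:ℤ)) ∪ I.image (fun k : ℕ => -(k:ℤ)) := by
    ext j
    simp only [hSdef, hIdef, Finset.mem_sdiff, Finset.mem_Icc, Finset.mem_singleton,
      Finset.mem_union, Finset.mem_image]
    constructor
    · rintro ⟨⟨h1, h2⟩, h0⟩
      rcases lt_or_gt_of_ne h0 with hlt | hgt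
      · right; exact ⟨(-j).toNat, ⟨by omega, by omega⟩, by omega⟩
      · left; exact ⟨j.toNat, ⟨by omega, by omega⟩, by omega⟩
    · rintro (⟨k, ⟨hk1, hk2⟩, rfl⟩ | ⟨k, ⟨hk1, hk2⟩, rfl⟩) <;>
        refine ⟨⟨by omega, by omega⟩, by omega⟩
  have hIdisj : Disjoint (I.image (fun k : ℕ => (k:ℤ))) (I.image (fun k : ℕ => -(k:ℤ))) := by
    rw [Finset.disjoint_left]
    rintro j hj1 hj2
    simp only [hIdef, Finset.mem_image, Finset.mem_Icc] at hj1 hj2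
    obtain ⟨k, ⟨hk1, -⟩, rfl⟩ := hj1
    obtain ⟨m, ⟨hm1, -⟩, hm⟩ := hj2
    omega
  have hinj1 : Function.Injective (fun k : ℕ => (k:ℤ)) := fun x y h => by simpa using h
  have hinj2 : Function.Injective (fun k : ℕ => -(k:ℤ)) := fun x y h => by simpa using h
  have hsum_split : ∀ g : ℤ → ℕ, (∀ j, g (-j) = g j) →
      ∑ j ∈ S, g j = 2 * ∑ k ∈ I, g (k:ℤ) := by
    intro g hg
    rw [hSplit, Finset.sum_union hIdisj, Finset.sum_image (fun x _ y _ h => hinj1 h),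
      Finset.sum_image (fun x _ y _ h => hinj2 h)]
    have : ∀ k ∈ I, g (-(k:ℤ)) = g (k:ℤ) := fun k _ => hg k
    rw [Finset.sum_congr rfl this]
    ring
  have hwt_eq : ∀ k : ℕ, wt (k:ℤ) = Real.sqrt ((k : ℝ) * ((k : ℝ) + 2)) / 2 := by
    intro k
    unfold wt
    rw [Int.cast_natCast, abs_of_nonneg (by positivity)]
  have hfinal : ∑ j ∈ S, Nle (a - wt j) =
      ∑ k ∈ I, Nle (a - Real.sqrt ((k : ℝ) * ((k : ℝ) + 2)) / 2) * 2 := by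
    rw [hsum_split (fun j => Nle (a - wt j)) (fun j => by beta_reduce; rw [wt_neg])]
    rw [Finset.mul_sum]
    refine Finset.sum_congr rfl fun k _ => ?_
    rw [hwt_eq k]; ring
  have hScard : S.card = 2 * K := by
    rw [hSplit, Finset.card_union_of_disjoint hIdisj,
      Finset.card_image_of_injective _ hinj1, Finset.card_image_of_injective _ hinj2,
      hIdef, Nat.card_Icc]
    omega
  rw [hcard1, Finset.sum_add_distrib, Finset.sum_const, smul_eq_mul, mul_one, hScard,
    hfinal]
  rw [show ∑ k ∈ I, Nle (a - Real.sqrt ((k : ℝ) * ((k : ℝ) + 2)) / 2) * 2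
    = 2 * ∑ k ∈ I, Nle (a - Real.sqrt ((k : ℝ) * ((k : ℝ) + 2)) / 2) by
      rw [Finset.mul_sum]; exact Finset.sum_congr rfl fun _ _ => by ring]
  omega
end

section
/- For every real a and every half-integer p, the number N_≤(a,p) of a-admissible sequences with total projection p satisfies N_≤(a,p) = ι(a,p) + ∑_{ℓ=1}^{∞} ( N_≤(a − √(ℓ(ℓ+2))/2, p − ℓ/2) + N_≤(a − √(ℓ(ℓ+2))/2, p + ℓ/2) ), where ι(a,p) = 1 if p ≠ 0 and √(|p|(|p|+1)) ≤ a, and ι(a,p) = 0 otherwise; the infinite sum has only finitely many nonzero terms since N_≤(b,q) = 0 for b < √3/2. -/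
/-- The set of `(a,p)`-admissible sequences: nonempty lists of nonzero half-integers
`mᵢ = jᵢ/2` with `∑ᵢ √(|mᵢ|(|mᵢ|+1)) ≤ a` and total projection `∑ᵢ mᵢ = p`.
The half-integer `p` is encoded by the integer `q = 2p`, so the projection constraint
reads `∑ᵢ jᵢ = q`. -/
def admP (a : ℝ) (q : ℤ) : Set (List ℤ) :=
  {l | l ≠ [] ∧ (∀ j ∈ l, j ≠ 0) ∧ (l.map wt).sum ≤ a ∧ l.sum = q}

/-- `N_≤(a,p)`, the number of `(a,p)`-admissible sequences, with `p = q/2`. -/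
noncomputable def NleP (a : ℝ) (q : ℤ) : ℕ := Nat.card (admP a q)

lemma half_abs_le_wt (j : ℤ) : |(j:ℝ)| / 2 ≤ wt j := by
  unfold wt
  gcongr
  have h0 : 0 ≤ |(j:ℝ)| := abs_nonneg _
  calc |(j:ℝ)| = Real.sqrt (|(j:ℝ)|^2) := (Real.sqrt_sq h0).symm
    _ ≤ Real.sqrt (|(j:ℝ)| * (|(j:ℝ)| + 2)) := by
        apply Real.sqrt_le_sqrt; nlinarith

lemma wt_sum_nonneg (l : List ℤ) : 0 ≤ (l.map wt).sum :=
  List.sum_nonneg (by simp only [List.mem_map]; rintro _ ⟨j, _, rfl⟩; exact wt_nonneg j)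

lemma admP_eq_empty {a : ℝ} {q : ℤ} (h : a < Real.sqrt 3 / 2) : admP a q = ∅ := by
  ext l
  simp only [Set.mem_empty_iff_false, iff_false]
  rintro ⟨hne, hnz, hsum, -⟩
  obtain ⟨j, t, rfl⟩ := List.exists_cons_of_ne_nil hne
  have h1 : Real.sqrt 3 / 2 ≤ wt j := sqrt3_le_wt (hnz j (by simp))
  have h2 : 0 ≤ (t.map wt).sum := wt_sum_nonneg t
  simp only [List.map_cons, List.sum_cons] at hsum
  linarith

lemma admP_finite (a : ℝ) (q : ℤ) : (admP a q).Finite := by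
  classical
  set N : ℕ := ⌈2 * a⌉₊ + 1 with hN
  set s : Finset ℤ := Finset.Icc (-(N:ℤ)) N with hs
  have key : admP a q ⊆ (fun l : List ↥(s : Set ℤ) => l.map Subtype.val) ''
      {l : List ↥(s : Set ℤ) | l.length ≤ N} := by
    rintro l ⟨hne, hnz, hsum, -⟩
    have hmem : ∀ j ∈ l, j ∈ (s : Set ℤ) := by
      intro j hj
      have h1 : wt j ≤ (l.map wt).sum :=
        List.single_le_sum (by simp only [List.mem_map]; rintro _ ⟨i, _, rfl⟩; exact wt_nonneg i)
          _ (List.mem_map_of_mem (f := wt) hj)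
      have h2 : |(j:ℝ)| / 2 ≤ a := le_trans (le_trans (half_abs_le_wt j) h1) hsum
      have h3 : |(j:ℝ)| ≤ N := by
        have : (2*a : ℝ) ≤ N := by
          have := Nat.le_ceil (2*a); push_cast [hN]; push_cast at this; linarith
        linarith
      rw [← Int.cast_abs] at h3
      have h4 : |j| ≤ (N:ℤ) := by exact_mod_cast h3
      simp only [hs, Finset.coe_Icc, Set.mem_Icc]
      exact abs_le.mp h4
    have hlen : l.length ≤ N := by
      have h1 : (l.length : ℝ) * (Real.sqrt 3 / 2) ≤ (l.map wt).sum := by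
        have := List.card_nsmul_le_sum (l.map wt) (Real.sqrt 3 / 2) ?_
        · simpa [List.length_map, nsmul_eq_mul] using this
        · simp only [List.mem_map]; rintro _ ⟨i, hi, rfl⟩; exact sqrt3_le_wt (hnz i hi)
      have h2 : (l.length : ℝ) ≤ N := by
        have hs3 : (1:ℝ) ≤ Real.sqrt 3 := by
          rw [show (1:ℝ) = Real.sqrt 1 by simp]; exact Real.sqrt_le_sqrt (by norm_num)
        have hlen0 : (0:ℝ) ≤ (l.length : ℝ) := by positivity
        have hNa : (2*a : ℝ) ≤ N := by
          have h := Nat.le_ceil (2*a)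
          have : ((⌈2*a⌉₊ : ℝ)) ≤ N := by rw [hN]; push_cast; linarith
          linarith
        nlinarith [hsum, h1]
      exact_mod_cast h2
    refine ⟨l.attach.map (fun x => ⟨x.1, hmem x.1 x.2⟩), ?_, by simp⟩
    simp [hlen]
  exact ((List.finite_length_le _ N).image _).subset key

lemma wt_succ (ℓ : ℕ) : wt ((ℓ:ℤ)+1) = Real.sqrt (((ℓ:ℝ)+1) * (((ℓ:ℝ)+1)+2)) / 2 := by
  unfold wt
  have h : |(((ℓ:ℤ)+1 : ℤ) : ℝ)| = (ℓ:ℝ)+1 := by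
    push_cast; rw [abs_of_nonneg]; positivity
  rw [h]

noncomputable def Fs (a : ℝ) (q : ℤ) : Finset (List ℤ) := (admP_finite a q).toFinset

lemma mem_Fs {a : ℝ} {q : ℤ} {l : List ℤ} : l ∈ Fs a q ↔ l ∈ admP a q :=
  (admP_finite a q).mem_toFinset

open Classical in
lemma Fs_decomp (a : ℝ) (q : ℤ) :
    Fs a q = (if q ≠ 0 ∧ wt q ≤ a then {[q]} else ∅) ∪
      (Finset.range (⌈2*a⌉₊+1)).biUnion (fun ℓ =>
        (Fs (a - wt ((ℓ:ℤ)+1)) (q - ((ℓ:ℤ)+1))).image (((ℓ:ℤ)+1) :: ·) ∪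
        (Fs (a - wt ((ℓ:ℤ)+1)) (q + ((ℓ:ℤ)+1))).image ((-((ℓ:ℤ)+1)) :: ·)) := by
  ext l
  constructor
  · intro hl
    rw [mem_Fs] at hl
    obtain ⟨hne, hnz, hsum, hsl⟩ := hl
    obtain ⟨j, t, rfl⟩ := List.exists_cons_of_ne_nil hne
    have hj0 : j ≠ 0 := hnz j (by simp)
    simp only [List.map_cons, List.sum_cons] at hsum hsl
    rcases eq_or_ne t [] with rfl | ht
    · simp only [List.sum_nil, add_zero] at hsl
      subst hsl
      apply Finset.mem_union_left
      rw [if_pos ⟨hj0, by simpa using hsum⟩]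
      simp
    · apply Finset.mem_union_right
      have htw : 0 ≤ (t.map wt).sum := wt_sum_nonneg t
      set ℓ : ℕ := j.natAbs - 1 with hℓ
      have hnab : 1 ≤ j.natAbs := Int.one_le_abs (by exact_mod_cast hj0) |>.trans_eq (by rw [Int.abs_eq_natAbs]) |> fun h => by omega
      have hnab' : j.natAbs = ℓ + 1 := by omega
      have habs : |(j:ℝ)| = (ℓ:ℝ) + 1 := by
        rw [← Int.cast_abs, Int.abs_eq_natAbs, hnab']; push_cast; ring
      have hwa : wt j ≤ a := by linarith
      have hja : (ℓ:ℝ) + 1 ≤ 2 * a := by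
        have := half_abs_le_wt j; rw [habs] at this; linarith
      have hℓN : ℓ < ⌈2*a⌉₊ + 1 := by
        have h2 : (ℓ:ℝ) + 1 ≤ (⌈2*a⌉₊ : ℝ) + 1 := by
          have := Nat.le_ceil (2*a); linarith
        have : (ℓ:ℕ) ≤ ⌈2*a⌉₊ := by exact_mod_cast (by linarith : (ℓ:ℝ) ≤ (⌈2*a⌉₊ : ℝ))
        omega
      apply Finset.mem_biUnion.mpr
      refine ⟨ℓ, Finset.mem_range.mpr hℓN, ?_⟩
      have hwj : wt j = wt ((ℓ:ℤ)+1) := by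
        unfold wt
        rw [habs, show |(((ℓ:ℤ)+1 : ℤ):ℝ)| = (ℓ:ℝ)+1 by push_cast; rw [abs_of_nonneg]; positivity]
      rcases Int.natAbs_eq j with hj | hj
      · apply Finset.mem_union_left
        apply Finset.mem_image.mpr
        have hjval : j = (ℓ:ℤ) + 1 := by rw [hj, hnab']; push_cast; ring
        refine ⟨t, mem_Fs.mpr ⟨ht, fun i hi => hnz i (by simp [hi]), ?_, ?_⟩, by rw [hjval]⟩
        · rw [← hwj]; linarith
        · omega
      · apply Finset.mem_union_right
        apply Finset.mem_image.mpr
        have hjval : j = -((ℓ:ℤ) + 1) := by rw [hj, hnab']; push_cast; ring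
        refine ⟨t, mem_Fs.mpr ⟨ht, fun i hi => hnz i (by simp [hi]), ?_, ?_⟩, by rw [hjval]⟩
        · rw [← hwj]; linarith
        · omega
  · intro hl
    rw [mem_Fs]
    rcases Finset.mem_union.mp hl with h | h
    · by_cases hc : q ≠ 0 ∧ wt q ≤ a
      · rw [if_pos hc] at h
        have : l = [q] := Finset.mem_singleton.mp h
        subst this
        exact ⟨by simp, by simpa using hc.1, by simpa using hc.2, by simp⟩
      · rw [if_neg hc] at h; exact absurd h (Finset.notMem_empty _)
    · obtain ⟨ℓ, -, h⟩ := Finset.mem_biUnion.mp h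
      rcases Finset.mem_union.mp h with h | h
      · obtain ⟨t, ht, rfl⟩ := Finset.mem_image.mp h
        obtain ⟨htne, htnz, htsum, hts⟩ := mem_Fs.mp ht
        refine ⟨by simp, ?_, ?_, by simp only [List.sum_cons, hts]; omega⟩
        · intro i hi
          rcases List.mem_cons.mp hi with rfl | hi
          · omega
          · exact htnz i hi
        · simp only [List.map_cons, List.sum_cons]; linarith
      · obtain ⟨t, ht, rfl⟩ := Finset.mem_image.mp h
        obtain ⟨htne, htnz, htsum, hts⟩ := mem_Fs.mp ht
        refine ⟨by simp, ?_, ?_, by simp only [List.sum_cons, hts]; omega⟩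
        · intro i hi
          rcases List.mem_cons.mp hi with rfl | hi
          · omega
          · exact htnz i hi
        · simp only [List.map_cons, List.sum_cons, wt_neg]; linarith

open Classical in
lemma Fs_card (a : ℝ) (q : ℤ) :
    (Fs a q).card = (if q ≠ 0 ∧ wt q ≤ a then 1 else 0) +
      ∑ ℓ ∈ Finset.range (⌈2*a⌉₊+1),
        ((Fs (a - wt ((ℓ:ℤ)+1)) (q - ((ℓ:ℤ)+1))).card +
         (Fs (a - wt ((ℓ:ℤ)+1)) (q + ((ℓ:ℤ)+1))).card) := by
  rw [Fs_decomp]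
  have hdisj1 : Disjoint
      (if q ≠ 0 ∧ wt q ≤ a then ({[q]} : Finset (List ℤ)) else ∅)
      ((Finset.range (⌈2*a⌉₊+1)).biUnion (fun ℓ =>
        (Fs (a - wt ((ℓ:ℤ)+1)) (q - ((ℓ:ℤ)+1))).image (((ℓ:ℤ)+1) :: ·) ∪
        (Fs (a - wt ((ℓ:ℤ)+1)) (q + ((ℓ:ℤ)+1))).image ((-((ℓ:ℤ)+1)) :: ·))) := by
    rw [Finset.disjoint_left]
    intro l hl hl'
    have hlq : l = [q] := by
      by_cases hc : q ≠ 0 ∧ wt q ≤ a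
      · rw [if_pos hc] at hl; exact Finset.mem_singleton.mp hl
      · rw [if_neg hc] at hl; exact absurd hl (Finset.notMem_empty _)
    obtain ⟨ℓ, -, h⟩ := Finset.mem_biUnion.mp hl'
    rcases Finset.mem_union.mp h with h | h <;>
    · obtain ⟨t, ht, heq⟩ := Finset.mem_image.mp h
      have htne := (mem_Fs.mp ht).1
      rw [hlq] at heq
      apply htne
      exact (List.cons.injEq _ _ _ _ ▸ heq).2
  rw [Finset.card_union_of_disjoint hdisj1]
  congr 1
  · split_ifs <;> simp
  · rw [Finset.card_biUnion]
    · apply Finset.sum_congr rfl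
      intro ℓ _
      have hd : Disjoint
          ((Fs (a - wt ((ℓ:ℤ)+1)) (q - ((ℓ:ℤ)+1))).image (((ℓ:ℤ)+1) :: ·))
          ((Fs (a - wt ((ℓ:ℤ)+1)) (q + ((ℓ:ℤ)+1))).image ((-((ℓ:ℤ)+1)) :: ·)) := by
        rw [Finset.disjoint_left]
        intro l hl hl'
        obtain ⟨t, -, rfl⟩ := Finset.mem_image.mp hl
        obtain ⟨t', -, heq⟩ := Finset.mem_image.mp hl'
        have := (List.cons.injEq _ _ _ _ ▸ heq).1
        omega
      rw [Finset.card_union_of_disjoint hd,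
        Finset.card_image_of_injective _ (List.cons_injective),
        Finset.card_image_of_injective _ (List.cons_injective)]
    · intro x _ y _ hxy
      rw [Function.onFun, Finset.disjoint_left]
      intro l hl hl'
      rcases Finset.mem_union.mp hl with h | h <;>
        rcases Finset.mem_union.mp hl' with h' | h' <;>
      · obtain ⟨t, -, rfl⟩ := Finset.mem_image.mp h
        obtain ⟨t', -, heq⟩ := Finset.mem_image.mp h'
        have := (List.cons.injEq _ _ _ _ ▸ heq).1
        omega

lemma NleP_eq (a : ℝ) (q : ℤ) : NleP a q = (Fs a q).card := by
  rw [NleP, Nat.card_coe_set_eq, Set.ncard_eq_toFinset_card _ (admP_finite a q)]; rfl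

lemma NleP_zero {a : ℝ} {q : ℤ} (h : a < Real.sqrt 3 / 2) : NleP a q = 0 := by
  rw [NleP, admP_eq_empty h]; simp
/-- the functional equation
`N_≤(a,p) = ι(a,p) + ∑_{ℓ≥1} (N_≤(a-√(ℓ(ℓ+2))/2, p-ℓ/2) + N_≤(a-√(ℓ(ℓ+2))/2, p+ℓ/2))`,
where `ι(a,p) = 1` if `p ≠ 0` and `√(|p|(|p|+1)) ≤ a` and `ι(a,p) = 0` otherwise.
With `p = q/2` one has `√(|p|(|p|+1)) = √(|q|(|q|+2))/2`. -/
theorem stmt_4 (a : ℝ) (q : ℤ) :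
    (NleP a q : ℝ) =
      (if q ≠ 0 ∧ Real.sqrt (|(q : ℝ)| * (|(q : ℝ)| + 2)) / 2 ≤ a then 1 else 0) +
      ∑' ℓ : ℕ,
        ((NleP (a - Real.sqrt (((ℓ : ℝ) + 1) * (((ℓ : ℝ) + 1) + 2)) / 2)
            (q - ((ℓ : ℤ) + 1)) : ℝ) +
         (NleP (a - Real.sqrt (((ℓ : ℝ) + 1) * (((ℓ : ℝ) + 1) + 2)) / 2)
            (q + ((ℓ : ℤ) + 1)) : ℝ)) := by
  classical
  have hvan : ∀ ℓ ∉ Finset.range (⌈2*a⌉₊+1),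
      ((NleP (a - Real.sqrt (((ℓ:ℝ)+1) * (((ℓ:ℝ)+1)+2)) / 2) (q - ((ℓ:ℤ)+1)) : ℝ) +
       (NleP (a - Real.sqrt (((ℓ:ℝ)+1) * (((ℓ:ℝ)+1)+2)) / 2) (q + ((ℓ:ℤ)+1)) : ℝ)) = 0 := by
    intro ℓ hℓ
    rw [Finset.mem_range, not_lt] at hℓ
    have hb : a - Real.sqrt (((ℓ:ℝ)+1) * (((ℓ:ℝ)+1)+2)) / 2 < Real.sqrt 3 / 2 := by
      have h1 : ((ℓ:ℝ)+1) ≤ Real.sqrt (((ℓ:ℝ)+1) * (((ℓ:ℝ)+1)+2)) := by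
        rw [show ((ℓ:ℝ)+1) = Real.sqrt (((ℓ:ℝ)+1)^2) from (Real.sqrt_sq (by positivity)).symm]
        apply Real.sqrt_le_sqrt
        rw [Real.sqrt_sq (by positivity)]
        nlinarith [Nat.cast_nonneg (α := ℝ) ℓ]
      have h2 : 2*a ≤ (⌈2*a⌉₊ : ℝ) := Nat.le_ceil _
      have h3 : (⌈2*a⌉₊ : ℝ) + 1 ≤ (ℓ:ℝ) + 1 := by
        have : ((⌈2*a⌉₊+1 : ℕ) : ℝ) ≤ (ℓ:ℝ) := by exact_mod_cast hℓ
        push_cast at this; linarith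
      have h4 : 0 < Real.sqrt 3 := by positivity
      linarith
    rw [NleP_zero hb, NleP_zero hb]; simp
  rw [tsum_eq_sum hvan, NleP_eq, Fs_card]
  push_cast
  congr 1
  apply Finset.sum_congr rfl
  intro ℓ _
  rw [NleP_eq, NleP_eq, wt_succ]
end
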